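/- For every natural number s ≥ 1 and every real number y, the even-order Taylor polynomial of the exponential function satisfies Σ_{i=0}^{2s} y^i/i! ≥ 0. -/

import Mathlib

open Set

lemma iter_deriv_exp_neg_within {x : ℝ} (hx : (0:ℝ) < x) (n : ℕ) :
    ∀ t ∈ Icc (0:ℝ) x,
      iteratedDerivWithin n (fun t : ℝ => Real.exp (-t)) (Icc 0 x) t
        = (-1) ^ n * Real.exp (-t) := by
  induction n with
  | zero => intro t ht; simp [iteratedDerivWithin_zero]
  | succ n ih =>
    intro t ht
    rw [iteratedDerivWithin_succ]
    have hcong : derivWithin (iteratedDerivWithin n (fun t : ℝ => Real.exp (-t)) (Icc 0 x))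
        (Icc 0 x) t = derivWithin (fun t : ℝ => (-1) ^ n * Real.exp (-t)) (Icc 0 x) t :=
      derivWithin_congr (fun u hu => ih u hu) (ih t ht)
    rw [hcong]
    have hd : HasDerivAt (fun t : ℝ => (-1:ℝ) ^ n * Real.exp (-t))
        ((-1:ℝ) ^ n * (Real.exp (-t) * (-1))) t := by
      have h1 : HasDerivAt (fun t : ℝ => Real.exp (-t)) (Real.exp (-t) * (-1)) t :=
        (Real.hasDerivAt_exp (-t)).comp t (hasDerivAt_neg t)
      exact h1.const_mul _
    rw [hd.hasDerivWithinAt.derivWithin (uniqueDiffOn_Icc hx t ht)]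
    ring

/-- Proposition 3.2: every even-order Taylor polynomial of the exponential function
is nonnegative on all of `ℝ`. -/
theorem even_taylor_exp_nonneg (s : ℕ) (hs : 1 ≤ s) (y : ℝ) :
    0 ≤ ∑ i ∈ Finset.range (2 * s + 1), y ^ i / (Nat.factorial i : ℝ) := by
  rcases le_or_gt 0 y with hy | hy
  · exact Finset.sum_nonneg fun i _ =>
      div_nonneg (pow_nonneg hy i) (Nat.cast_nonneg _)
  · set x : ℝ := -y with hxy
    have hx : (0:ℝ) < x := by simp [hxy]; linarith
    set f : ℝ → ℝ := fun t => Real.exp (-t) with hf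
    have hcd : ContDiffOn ℝ (2*s) f (Icc 0 x) :=
      ((Real.contDiff_exp.comp contDiff_neg).of_le le_top).contDiffOn
    have hdiff : DifferentiableOn ℝ (iteratedDerivWithin (2*s) f (Icc 0 x)) (Ioo 0 x) := by
      intro t ht
      have ht' : t ∈ Icc (0:ℝ) x := Ioo_subset_Icc_self ht
      have : DifferentiableAt ℝ (fun t : ℝ => (-1:ℝ)^(2*s) * Real.exp (-t)) t := by
        exact ((Real.differentiable_exp.comp (differentiable_neg)).const_mul _) t
      refine (this.differentiableWithinAt).congr ?_ ?_
      · exact fun u hu => iter_deriv_exp_neg_within hx (2*s) u (Ioo_subset_Icc_self hu)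
      · exact iter_deriv_exp_neg_within hx (2*s) t ht'
    obtain ⟨x', hx', heq'⟩ := taylor_mean_remainder_lagrange (n := 2*s) (x₀ := 0) (x := x) (f := f) hx.ne
      (by rw [uIcc_of_le hx.le]; exact hcd) (by rw [uIcc_of_le hx.le, uIoo_of_le hx.le]; exact hdiff)
    rw [uIcc_of_le hx.le] at heq'
    rw [uIoo_of_le hx.le] at hx'
    have heq : f x - taylorWithinEval f (2*s) (Icc 0 x) 0 x =
        iteratedDerivWithin (2*s+1) f (Icc 0 x) x' * (x - 0) ^ (2*s+1)
          / (Nat.factorial (2*s+1) : ℝ) := heq'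
    have htay : taylorWithinEval f (2*s) (Icc 0 x) 0 x
        = ∑ i ∈ Finset.range (2*s+1), y ^ i / (Nat.factorial i : ℝ) := by
      rw [taylor_within_apply]
      refine Finset.sum_congr rfl fun k hk => ?_
      rw [iter_deriv_exp_neg_within hx k 0 (left_mem_Icc.mpr hx.le)]
      simp only [sub_zero, smul_eq_mul, neg_zero, Real.exp_zero, mul_one]
      rw [hxy]
      rw [show (-y)^k = (-1)^k * y^k by ring]
      field_simp
      rw [← pow_mul, pow_mul']
      norm_num
    have hiter : iteratedDerivWithin (2*s+1) f (Icc 0 x) x'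
        = (-1) ^ (2*s+1) * Real.exp (-x') :=
      iter_deriv_exp_neg_within hx (2*s+1) x' (Ioo_subset_Icc_self hx')
    rw [htay, hiter] at heq
    have hkey : Real.exp (-x) - ∑ i ∈ Finset.range (2*s+1), y ^ i / (Nat.factorial i : ℝ)
        = -(Real.exp (-x') * (x - 0) ^ (2*s+1) / (Nat.factorial (2*s+1) : ℝ)) := by
      rw [show f x = Real.exp (-x) from rfl] at heq
      rw [heq]
      rw [pow_succ, show (-1:ℝ)^(2*s) = 1 by simp [pow_mul]]
      ring
    have hpos : 0 < Real.exp (-x') * (x - 0) ^ (2*s+1) / (Nat.factorial (2*s+1) : ℝ) := by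
      apply div_pos
      · exact mul_pos (Real.exp_pos _) (pow_pos (by linarith : (0:ℝ) < x - 0) _)
      · exact_mod_cast Nat.factorial_pos _
    nlinarith [Real.exp_pos (-x)]
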